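/- For a prime p and r ≥ 1, the number of lines in Z_{p^r} × Z_{p^r} equals (p+1)·p^{2r-1}. -/

import Mathlib

def IsLine (k : ℕ) (L : Set (ZMod k × ZMod k)) : Prop :=
  ∃ a b t1 t2 : ZMod k, L = {p | ∃ w : ZMod k, p = (a + w * t1, b + w * t2)}

namespace Stmt7Aux

variable (p r : ℕ)

abbrev Par (p r : ℕ) := (ZMod (p^r) × ZMod (p^r)) ⊕ (ZMod (p^(r-1)) × ZMod (p^r))

/-- The line associated to a parameter. -/
def g : Par p r → Set (ZMod (p^r) × ZMod (p^r))
  | .inl (m, c) => {q | ∃ w : ZMod (p^r), q = (w, c + w * m)}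
  | .inr (s, d) => {q | ∃ w : ZMod (p^r), q = (d + w * ((p : ZMod (p^r)) * ((s.val : ℕ) : ZMod (p^r))), w)}

variable {p r : ℕ}

lemma neZero_pr (hp : p.Prime) : NeZero (p ^ r) := ⟨(Nat.pow_pos (n := r) hp.pos).ne'⟩

lemma neZero_pr1 (hp : p.Prime) : NeZero (p ^ (r-1)) := ⟨(Nat.pow_pos hp.pos).ne'⟩

/-- p is not a unit in ZMod p^r -/
lemma p_not_unit (hp : p.Prime) (hr : 1 ≤ r) : ¬ IsUnit ((p : ℕ) : ZMod (p^r)) := by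
  intro h
  haveI : Fact p.Prime := ⟨hp⟩
  obtain ⟨u, hu⟩ := h
  have h1 : (u : ZMod (p^r)) * ↑u⁻¹ = 1 := u.mul_inv
  rw [hu] at h1
  set φ := ZMod.castHom (dvd_pow_self p (by omega : r ≠ 0)) (ZMod p)
  have h2 := congrArg φ h1
  rw [map_mul, map_one, map_natCast, ZMod.natCast_self, zero_mul] at h2
  exact zero_ne_one h2

/-- key: multiply-by-p only depends on value mod p^(r-1) -/
lemma key (hp : p.Prime) (hr : 1 ≤ r) (s : ZMod (p^r)) :
    (p : ZMod (p^r)) * (((s.val : ZMod (p^(r-1))).val : ℕ) : ZMod (p^r)) = p * s := by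
  haveI := neZero_pr hp (r := r); haveI := neZero_pr1 hp (r := r)
  rw [ZMod.val_natCast]
  have hnat : p ^ r = p * p ^ (r-1) := by rw [← pow_succ']; congr 1; omega
  have hz : ((p : ZMod (p^r)) * (p:ZMod (p^r))^(r-1)) = 0 := by
    calc ((p : ZMod (p^r)) * (p:ZMod (p^r))^(r-1)) = ((p * p^(r-1) : ℕ) : ZMod (p^r)) := by
          push_cast; ring
      _ = ((p^r : ℕ) : ZMod (p^r)) := by rw [← hnat]
      _ = 0 := ZMod.natCast_self _
  obtain ⟨q', hq⟩ : ∃ q', s.val = p^(r-1) * q' + s.val % p^(r-1) :=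
    ⟨s.val / p^(r-1), (Nat.div_add_mod _ _).symm⟩
  have hs : s = ((p^(r-1) * q' + s.val % p^(r-1) : ℕ) : ZMod (p^r)) := by
    rw [← hq]; simp [ZMod.natCast_val]
  conv_rhs => rw [hs]
  push_cast
  linear_combination (-(q' : ZMod (p^r))) * hz

/-- nonunits are multiples of p -/
lemma nonunit_eq (hp : p.Prime) (hr : 1 ≤ r) (t : ZMod (p^r)) (h : ¬ IsUnit t) : ∃ u : ZMod (p^r), t = p * u := by
  haveI := neZero_pr hp (r := r)
  have ht : t = ((t.val : ℕ) : ZMod (p^r)) := by simp [ZMod.natCast_val]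
  rw [ht, ZMod.isUnit_iff_coprime] at h
  have hdvd : p ∣ t.val := by
    by_contra hnd
    exact h (Nat.Coprime.pow_right r ((Nat.Prime.coprime_iff_not_dvd hp).2 hnd).symm)
  obtain ⟨k, hk⟩ := hdvd
  exact ⟨(k : ZMod (p^r)), by rw [ht, hk]; push_cast; ring⟩

lemma g_mem (hp : p.Prime) (hr : 1 ≤ r) (x : Par p r) : IsLine (p^r) (g p r x) ∧ (g p r x).ncard = p ^ r := by
  haveI := neZero_pr hp (r := r)
  obtain (⟨m, c⟩ | ⟨s, d⟩) := x
  · constructor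
    · exact ⟨0, c, 1, m, by ext q; simp [g]⟩
    · have : g p r (.inl (m, c)) = Set.range (fun w : ZMod (p^r) => (w, c + w * m)) := by
        ext q; simp [g, Set.range, eq_comm]
      rw [this, ← Nat.card_coe_set_eq, Nat.card_range_of_injective, Nat.card_zmod]
      intro a b hab
      simpa using congrArg Prod.fst hab
  · constructor
    · exact ⟨d, 0, (p : ZMod (p^r)) * ((s.val : ℕ) : ZMod (p^r)), 1, by ext q; simp [g]⟩
    · have : g p r (.inr (s, d)) = Set.range
          (fun w : ZMod (p^r) => (d + w * ((p : ZMod (p^r)) * ((s.val : ℕ) : ZMod (p^r))), w)) := by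
        ext q; simp [g, Set.range, eq_comm]
      rw [this, ← Nat.card_coe_set_eq, Nat.card_range_of_injective, Nat.card_zmod]
      intro a b hab
      simpa using congrArg Prod.snd hab

lemma g_inj (hp : p.Prime) (hr : 1 ≤ r) : Function.Injective (g p r) := by
  haveI := neZero_pr hp (r := r); haveI := neZero_pr1 hp (r := r)
  have hval : ∀ s s' : ZMod (p^(r-1)),
      ((p : ZMod (p^r)) * ((s.val : ℕ) : ZMod (p^r)) = (p : ZMod (p^r)) * ((s'.val : ℕ) : ZMod (p^r))) → s = s' := by
    intro s s' h
    have h2 : ((p * s.val : ℕ) : ZMod (p^r)) = ((p * s'.val : ℕ) : ZMod (p^r)) := by push_cast; exact h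
    have hlt : ∀ t : ZMod (p^(r-1)), p * t.val < p ^ r := by
      intro t
      calc p * t.val < p * p^(r-1) := by
            exact (Nat.mul_lt_mul_left hp.pos).2 (ZMod.val_lt t)
        _ = p ^ r := by rw [← pow_succ']; congr 1; omega
    have := congrArg ZMod.val h2
    rw [ZMod.val_natCast_of_lt (hlt s), ZMod.val_natCast_of_lt (hlt s')] at this
    have := Nat.eq_of_mul_eq_mul_left hp.pos this
    exact ZMod.val_injective _ this
  -- helper: a "slope" line never equals a "steep" line
  have hmix : ∀ (m c : ZMod (p^r)) (s : ZMod (p^(r-1))) (d : ZMod (p^r)),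
      g p r (.inl (m, c)) ≠ g p r (.inr (s, d)) := by
    intro m c s d hEq
    set sc : ZMod (p^r) := ((s.val : ℕ) : ZMod (p^r))
    have h0 : (d + 0 * ((p:ZMod (p^r)) * sc), (0:ZMod (p^r))) ∈ g p r (.inr (s, d)) := ⟨0, rfl⟩
    have h1 : (d + 1 * ((p:ZMod (p^r)) * sc), (1:ZMod (p^r))) ∈ g p r (.inr (s, d)) := ⟨1, rfl⟩
    rw [← hEq] at h0 h1
    obtain ⟨w0, hw0⟩ := h0
    obtain ⟨w1, hw1⟩ := h1
    have e0a : d + 0 * ((p:ZMod (p^r)) * sc) = w0 := congrArg Prod.fst hw0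
    have e0b : (0:ZMod (p^r)) = c + w0 * m := congrArg Prod.snd hw0
    have e1a : d + 1 * ((p:ZMod (p^r)) * sc) = w1 := congrArg Prod.fst hw1
    have e1b : (1:ZMod (p^r)) = c + w1 * m := congrArg Prod.snd hw1
    have hunit : IsUnit ((p:ℕ) : ZMod (p^r)) := by
      refine IsUnit.of_mul_eq_one (sc * m) ?_
      linear_combination m * e1a - m * e0a - e1b + e0b
    exact p_not_unit hp hr hunit
  rintro (⟨m, c⟩ | ⟨s, d⟩) (⟨m', c'⟩ | ⟨s', d'⟩) hEq
  · -- both slope lines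
    have h0 : ((0:ZMod (p^r)), c + 0 * m) ∈ g p r (.inl (m, c)) := ⟨0, rfl⟩
    have h1 : ((1:ZMod (p^r)), c + 1 * m) ∈ g p r (.inl (m, c)) := ⟨1, rfl⟩
    rw [hEq] at h0 h1
    obtain ⟨w0, hw0⟩ := h0
    obtain ⟨w1, hw1⟩ := h1
    have e0a : (0:ZMod (p^r)) = w0 := congrArg Prod.fst hw0
    have e0b : c + 0 * m = c' + w0 * m' := congrArg Prod.snd hw0
    have e1a : (1:ZMod (p^r)) = w1 := congrArg Prod.fst hw1
    have e1b : c + 1 * m = c' + w1 * m' := congrArg Prod.snd hw1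
    subst e0a; subst e1a
    have hc : c = c' := by linear_combination e0b
    have hm : m = m' := by linear_combination e1b - e0b
    rw [hc, hm]
  · exact absurd hEq (hmix m c s' d')
  · exact absurd hEq.symm (hmix m' c' s d)
  · -- both steep
    set sc : ZMod (p^r) := ((s.val : ℕ) : ZMod (p^r))
    set sc' : ZMod (p^r) := ((s'.val : ℕ) : ZMod (p^r))
    have h0 : (d + 0 * ((p:ZMod (p^r)) * sc), (0:ZMod (p^r))) ∈ g p r (.inr (s, d)) := ⟨0, rfl⟩
    have h1 : (d + 1 * ((p:ZMod (p^r)) * sc), (1:ZMod (p^r))) ∈ g p r (.inr (s, d)) := ⟨1, rfl⟩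
    rw [hEq] at h0 h1
    obtain ⟨w0, hw0⟩ := h0
    obtain ⟨w1, hw1⟩ := h1
    have e0a : d + 0 * ((p:ZMod (p^r)) * sc) = d' + w0 * ((p:ZMod (p^r)) * sc') := congrArg Prod.fst hw0
    have e0b : (0:ZMod (p^r)) = w0 := congrArg Prod.snd hw0
    have e1a : d + 1 * ((p:ZMod (p^r)) * sc) = d' + w1 * ((p:ZMod (p^r)) * sc') := congrArg Prod.fst hw1
    have e1b : (1:ZMod (p^r)) = w1 := congrArg Prod.snd hw1
    have hd : d = d' := by rw [← e0b] at e0a; linear_combination e0a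
    have hs : s = s' := by
      apply hval
      linear_combination e1a - e0a - ((p:ZMod (p^r)) * sc') * e1b + ((p:ZMod (p^r)) * sc') * e0b
    rw [hd, hs]

lemma g_surj (hp : p.Prime) (hr : 1 ≤ r) (L : Set (ZMod (p^r) × ZMod (p^r))) (hL : IsLine (p^r) L) (hc : L.ncard = p ^ r) :
    ∃ x : Par p r, g p r x = L := by
  haveI := neZero_pr hp (r := r); haveI := neZero_pr1 hp (r := r)
  obtain ⟨a, b, t1, t2, rfl⟩ := hL
  by_cases h1 : IsUnit t1
  · obtain ⟨u, rfl⟩ := h1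
    have hmi : (u : ZMod (p^r)) * ↑u⁻¹ = 1 := u.mul_inv
    refine ⟨.inl (t2 * ↑u⁻¹, b - a * (t2 * ↑u⁻¹)), ?_⟩
    ext q
    simp only [g, Set.mem_setOf_eq]
    constructor
    · rintro ⟨x, rfl⟩
      refine ⟨(x - a) * ↑u⁻¹, ?_⟩
      rw [Prod.mk.injEq]
      refine ⟨?_, ?_⟩
      · linear_combination (a - x) * hmi
      · ring
    · rintro ⟨w, rfl⟩
      refine ⟨a + w * ↑u, ?_⟩
      rw [Prod.mk.injEq]
      refine ⟨rfl, ?_⟩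
      linear_combination (-(w * t2)) * hmi
  · -- t1 nonunit; then t2 must be a unit
    by_cases h2 : IsUnit t2
    · obtain ⟨k, hk⟩ := nonunit_eq hp hr t1 h1
      obtain ⟨u, rfl⟩ := h2
      have hmi : (u : ZMod (p^r)) * ↑u⁻¹ = 1 := u.mul_inv
      have hkey : (p : ZMod (p^r)) *
          (((((k * ↑u⁻¹ : ZMod (p^r)).val : ℕ) : ZMod (p^(r-1))).val : ℕ) : ZMod (p^r))
          = p * (k * ↑u⁻¹) := key hp hr (k * ↑u⁻¹)
      refine ⟨.inr ((((k * ↑u⁻¹ : ZMod (p^r)).val : ℕ) : ZMod (p^(r-1))),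
        a - b * (p * (k * ↑u⁻¹))), ?_⟩
      ext q
      simp only [g, Set.mem_setOf_eq]
      constructor
      · rintro ⟨y, rfl⟩
        refine ⟨(y - b) * ↑u⁻¹, ?_⟩
        rw [Prod.mk.injEq, hk]
        refine ⟨?_, ?_⟩
        · linear_combination y * hkey
        · linear_combination (b - y) * hmi
      · rintro ⟨w, rfl⟩
        refine ⟨b + w * ↑u, ?_⟩
        rw [Prod.mk.injEq, hk]
        refine ⟨?_, rfl⟩
        linear_combination (-(b + w * ↑u)) * hkey - w * (p : ZMod (p^r)) * k * hmi
    · -- both nonunits: cardinality too small, contradiction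
      exfalso
      obtain ⟨k1, hk1⟩ := nonunit_eq hp hr t1 h1
      obtain ⟨k2, hk2⟩ := nonunit_eq hp hr t2 h2
      set f : ZMod (p^r) → ZMod (p^r) × ZMod (p^r) := fun w => (a + w * t1, b + w * t2)
      have hsub : {q | ∃ w : ZMod (p^r), q = (a + w * t1, b + w * t2)} ⊆
          Set.range (fun z : ZMod (p^(r-1)) => f (((z.val : ℕ) : ZMod (p^r)))) := by
        rintro q ⟨w, rfl⟩
        refine ⟨((w.val : ℕ) : ZMod (p^(r-1))), ?_⟩
        have hkk : ∀ t k : ZMod (p^r), t = p * k →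
            (((((w.val : ℕ) : ZMod (p^(r-1))).val : ℕ)) : ZMod (p^r)) * t = w * t := by
          intro t k hkk'
          have h3 : (p : ZMod (p^r)) * ((((w.val : ℕ) : ZMod (p^(r-1))).val : ℕ) : ZMod (p^r)) = p * w :=
            key hp hr w
          rw [hkk']
          ring_nf
          linear_combination k * h3
        simp only [f, Prod.mk.injEq]
        constructor
        · rw [hkk t1 k1 hk1]
        · rw [hkk t2 k2 hk2]
      have hle : ({q | ∃ w : ZMod (p^r), q = (a + w * t1, b + w * t2)}).ncard ≤ p ^ (r-1) := by
        calc _ ≤ (Set.range (fun z : ZMod (p^(r-1)) => f (((z.val : ℕ) : ZMod (p^r))))).ncard :=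
              Set.ncard_le_ncard hsub (Set.toFinite _)
          _ ≤ p ^ (r-1) := by
              rw [← Set.image_univ]
              exact le_trans (Set.ncard_image_le Set.finite_univ)
                (le_of_eq (by rw [Set.ncard_univ, Nat.card_zmod]))
      rw [hc] at hle
      have : p ^ (r-1) < p ^ r := Nat.pow_lt_pow_right hp.one_lt (by omega)
      omega

end Stmt7Aux

theorem stmt7 (p : ℕ) (hp : p.Prime) (r : ℕ) (hr : 1 ≤ r) :
    {L : Set (ZMod (p ^ r) × ZMod (p ^ r)) |
      IsLine (p ^ r) L ∧ L.ncard = p ^ r}.ncard = (p + 1) * p ^ (2 * r - 1) := by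
  have hset : {L : Set (ZMod (p ^ r) × ZMod (p ^ r)) |
      IsLine (p ^ r) L ∧ L.ncard = p ^ r} = Set.range (Stmt7Aux.g p r) := by
    ext L
    constructor
    · rintro ⟨h1, h2⟩
      obtain ⟨x, hx⟩ := Stmt7Aux.g_surj hp hr L h1 h2
      exact ⟨x, hx⟩
    · rintro ⟨x, rfl⟩
      exact Stmt7Aux.g_mem hp hr x
  haveI := Stmt7Aux.neZero_pr (r := r) hp
  haveI := Stmt7Aux.neZero_pr1 (r := r) hp
  rw [hset, ← Nat.card_coe_set_eq, Nat.card_range_of_injective (Stmt7Aux.g_inj hp hr)]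
  rw [Nat.card_sum, Nat.card_prod, Nat.card_prod, Nat.card_zmod, Nat.card_zmod]
  obtain ⟨r', rfl⟩ : ∃ r', r = r' + 1 := ⟨r - 1, by omega⟩
  have h1 : r' + 1 - 1 = r' := by omega
  have h2 : 2 * (r' + 1) - 1 = 2 * r' + 1 := by omega
  rw [h1, h2]
  ring
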